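/- Let H = ℚ[x_1, x_2, …] be the polynomial algebra on countably many commuting variables, with the convention x_0 := 1. Define the ℚ-algebra homomorphism Δ : H → H ⊗_ℚ H on generators by Δ(x_n) := Σ_{k=0}^{n} W_{n,k} ⊗ x_k, where W_{n,k} ∈ H is the commutative partial Bell polynomial B_{n+1,k+1} under the substitution d_j ↦ x_{j−1} (so d_1 ↦ 1), and define the ℚ-algebra homomorphism ε : H → ℚ by ε(x_n) = 0 for all n ≥ 1. Then Δ is coassociative, (Δ ⊗ id) ∘ Δ = (id ⊗ Δ) ∘ Δ, and ε is a counit for Δ: (ε ⊗ id) ∘ Δ = id = (id ⊗ ε) ∘ Δ. (This is the coproduct of the Faà di Bruno Hopf algebra.) -/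

import Mathlib

open Finset MvPolynomial TensorProduct

noncomputable def pBell {A : Type*} [Ring A] (d : ℕ → A) : ℕ → ℕ → A
  | 0, 0 => 1
  | _ + 1, 0 => 0
  | 0, _ + 1 => 0
  | n + 1, k + 1 =>
      ∑ j ∈ Finset.range (n + 1), (n.choose j : A) * (pBell d (n - j) k * d (j + 1))
  termination_by _ k => k

variable {A : Type*} [CommRing A] (d : ℕ → A)

@[simp] lemma pBell_zero_zero : pBell d 0 0 = 1 := by rw [pBell]
@[simp] lemma pBell_succ_zero (n : ℕ) : pBell d (n+1) 0 = 0 := by rw [pBell]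
@[simp] lemma pBell_zero_succ (k : ℕ) : pBell d 0 (k+1) = 0 := by rw [pBell]
lemma pBell_succ_succ (n k : ℕ) :
    pBell d (n+1) (k+1) =
      ∑ j ∈ Finset.range (n + 1), (n.choose j : A) * (pBell d (n - j) k * d (j + 1)) := by
  rw [pBell]

lemma pBell_eq_zero : ∀ k n, n < k → pBell d n k = 0 := by
  intro k
  induction k with
  | zero => intro n h; omega
  | succ k ih =>
    intro n h
    match n with
    | 0 => rw [pBell]
    | m + 1 =>
      rw [pBell_succ_succ]
      refine Finset.sum_eq_zero fun j hj => ?_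
      rw [ih _ (by omega), zero_mul, mul_zero]

section Series
open PowerSeries

variable [Algebra ℚ A]

lemma natTorsionFree : NoZeroSMulDivisors ℕ A := by
  constructor
  intro n x h
  rcases eq_or_ne n 0 with rfl | hn
  · exact Or.inl rfl
  · right
    have h2 : (n : ℚ) • x = 0 := by rw [Nat.cast_smul_eq_nsmul]; exact h
    rcases smul_eq_zero.mp h2 with h3 | h3
    · exact absurd (Nat.cast_eq_zero.mp h3) hn
    · exact h3

/-- The exponential generating series `∑_{n ≥ 1} d_n X^n / n!`. -/
noncomputable def fser : PowerSeries A :=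
  PowerSeries.mk fun n => if n = 0 then 0 else ((n.factorial : ℚ))⁻¹ • d n

lemma coeff_fser (n : ℕ) :
    PowerSeries.coeff n (fser d) = if n = 0 then 0 else ((n.factorial : ℚ))⁻¹ • d n :=
  PowerSeries.coeff_mk _ _

lemma fact_cast_ne_zero (n : ℕ) : ((n.factorial : ℚ)) ≠ 0 :=
  Nat.cast_ne_zero.mpr n.factorial_ne_zero

lemma coeff_deriv_fser (j : ℕ) :
    PowerSeries.coeff j (d⁄dX A (fser d)) = ((j.factorial : ℚ))⁻¹ • d (j + 1) := by
  rw [PowerSeries.coeff_derivative, coeff_fser, if_neg (Nat.succ_ne_zero j)]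
  have h1 : ((j : A) + 1) = ((j + 1 : ℕ) : A) := by push_cast; ring
  rw [h1, mul_comm, ← nsmul_eq_mul, ← Nat.cast_smul_eq_nsmul ℚ, smul_smul]
  congr 1
  rw [Nat.factorial_succ]
  push_cast
  field_simp

lemma coeff_fser_pow : ∀ (k n : ℕ), PowerSeries.coeff n (fser d ^ k) =
    ((k.factorial : ℚ) / n.factorial) • pBell d n k := by
  intro k
  induction k with
  | zero =>
    intro n
    rw [pow_zero, PowerSeries.coeff_one]
    cases n with
    | zero => simp
    | succ m => simp
  | succ k ih =>
    have key : fser d ^ (k+1) =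
        PowerSeries.mk (fun n => (((k+1).factorial : ℚ) / n.factorial) • pBell d n (k+1)) := by
      haveI := natTorsionFree (A := A)
      haveI : IsAddTorsionFree A := IsAddTorsionFree.of_module_rat A
      apply PowerSeries.derivative.ext
      · ext n
        have hL : PowerSeries.coeff n (d⁄dX A (fser d ^ (k+1))) =
            ∑ j ∈ Finset.range (n+1),
              (((k+1).factorial : ℚ) / ((n-j).factorial * j.factorial)) •
                (pBell d (n-j) k * d (j+1)) := by
          rw [Derivation.leibniz_pow, Nat.add_sub_cancel, map_nsmul, smul_eq_mul,
            PowerSeries.coeff_mul, Finset.Nat.sum_antidiagonal_eq_sum_range_succ_mk,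
            ← Finset.sum_range_reflect, Finset.smul_sum]
          refine Finset.sum_congr rfl fun j hj => ?_
          have hjn : j ≤ n := by simpa [Nat.lt_succ_iff] using hj
          simp only [Nat.succ_sub_one]
          rw [Nat.sub_sub_self hjn, ih, coeff_deriv_fser,
            smul_mul_assoc, mul_smul_comm, smul_smul, ← Nat.cast_smul_eq_nsmul ℚ, smul_smul]
          congr 1
          rw [Nat.factorial_succ]
          push_cast
          field_simp
        have hR : PowerSeries.coeff n
              (d⁄dX A (PowerSeries.mk
                (fun n => (((k+1).factorial : ℚ) / n.factorial) • pBell d n (k+1)))) =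
            ∑ j ∈ Finset.range (n+1),
              (((k+1).factorial : ℚ) / ((n-j).factorial * j.factorial)) •
                (pBell d (n-j) k * d (j+1)) := by
          rw [PowerSeries.coeff_derivative, PowerSeries.coeff_mk]
          have h1 : ((n : A) + 1) = ((n + 1 : ℕ) : A) := by push_cast; ring
          rw [h1, mul_comm, ← nsmul_eq_mul, ← Nat.cast_smul_eq_nsmul ℚ, smul_smul]
          have h2 : ((n + 1 : ℕ) : ℚ) * (((k+1).factorial : ℚ) / (n+1).factorial) =
              ((k+1).factorial : ℚ) / n.factorial := by
            rw [Nat.factorial_succ (n := n)]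
            push_cast
            field_simp
          rw [h2, pBell_succ_succ, Finset.smul_sum]
          refine Finset.sum_congr rfl fun j hj => ?_
          have hjn : j ≤ n := by simpa [Nat.lt_succ_iff] using hj
          rw [← nsmul_eq_mul, ← Nat.cast_smul_eq_nsmul ℚ, smul_smul]
          congr 1
          rw [Nat.cast_choose ℚ hjn]
          field_simp
        rw [hL, hR]
      · rw [map_pow]
        have h0 : PowerSeries.constantCoeff (fser d) = 0 := by
          rw [← PowerSeries.coeff_zero_eq_constantCoeff, coeff_fser, if_pos rfl]
        rw [h0, zero_pow (Nat.succ_ne_zero k), ← PowerSeries.coeff_zero_eq_constantCoeff,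
          PowerSeries.coeff_mk, pBell_zero_succ, smul_zero]
    intro n
    rw [key, PowerSeries.coeff_mk]

lemma natCast_mul_eq_smul (m : ℕ) (y : A) : (m : A) * y = (m : ℚ) • y := by
  rw [← nsmul_eq_mul, ← Nat.cast_smul_eq_nsmul ℚ]

lemma coeff_deriv_fser_pow (m j : ℕ) :
    PowerSeries.coeff j ((d⁄dX A) ((fser d) ^ m)) =
      ((m.factorial : ℚ) / j.factorial) • pBell d (j + 1) m := by
  rw [PowerSeries.coeff_derivative, coeff_fser_pow]
  have h1 : ((j : A) + 1) = ((j + 1 : ℕ) : A) := by push_cast; ring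
  rw [h1, mul_comm, natCast_mul_eq_smul, smul_smul]
  congr 1
  rw [Nat.factorial_succ]
  push_cast
  field_simp

lemma pBell_conv (n a b : ℕ) :
    ∑ j ∈ Finset.range (n + 1),
        (n.choose j : A) * (pBell d (n - j) (a + 1) * pBell d (j + 1) (b + 1)) =
      ((a + b + 1).choose b : A) * pBell d (n + 1) (a + b + 2) := by
  have E : (fser d) ^ (a + 1) * (d⁄dX A) ((fser d) ^ (b + 1)) =
      (((b : ℚ) + 1) / ((a : ℚ) + (b : ℚ) + 2)) • (d⁄dX A) ((fser d) ^ (a + b + 2)) := by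
    rw [Derivation.leibniz_pow, Derivation.leibniz_pow]
    simp only [smul_eq_mul, Nat.add_sub_cancel, show a + b + 2 - 1 = a + b + 1 from rfl]
    rw [← Nat.cast_smul_eq_nsmul ℚ (b+1), ← Nat.cast_smul_eq_nsmul ℚ (a+b+2),
      mul_smul_comm, smul_smul]
    congr 1
    · push_cast
      field_simp
    · ring
  have hL : PowerSeries.coeff n ((fser d) ^ (a + 1) * (d⁄dX A) ((fser d) ^ (b + 1))) =
      ∑ j ∈ Finset.range (n + 1),
        ((((a+1).factorial : ℚ) * ((b+1).factorial : ℚ)) / (((n-j).factorial : ℚ) * (j.factorial : ℚ))) •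
          (pBell d (n - j) (a + 1) * pBell d (j + 1) (b + 1)) := by
    rw [PowerSeries.coeff_mul, Finset.Nat.sum_antidiagonal_eq_sum_range_succ_mk,
      ← Finset.sum_range_reflect]
    refine Finset.sum_congr rfl fun j hj => ?_
    have hjn : j ≤ n := by simpa [Nat.lt_succ_iff] using hj
    simp only [Nat.succ_sub_one]
    rw [Nat.sub_sub_self hjn, coeff_fser_pow, coeff_deriv_fser_pow,
      smul_mul_assoc, mul_smul_comm, smul_smul]
    congr 1
    field_simp
  have hR : PowerSeries.coeff n
        ((((b : ℚ) + 1) / ((a : ℚ) + (b : ℚ) + 2)) • (d⁄dX A) ((fser d) ^ (a + b + 2))) =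
      ((((b : ℚ) + 1) * ((a+b+1).factorial : ℚ)) / (n.factorial : ℚ)) •
        pBell d (n + 1) (a + b + 2) := by
    rw [PowerSeries.coeff_smul, coeff_deriv_fser_pow, smul_smul]
    congr 1
    rw [show (a + b + 2).factorial = (a + b + 2) * (a + b + 1).factorial from Nat.factorial_succ _]
    push_cast
    field_simp
  have hc : ((((a+1).factorial : ℚ) * ((b+1).factorial : ℚ)) / (n.factorial : ℚ)) ≠ 0 :=
    div_ne_zero (mul_ne_zero (fact_cast_ne_zero _) (fact_cast_ne_zero _)) (fact_cast_ne_zero n)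
  refine smul_right_injective A hc ?_
  show ((((a+1).factorial : ℚ) * ((b+1).factorial : ℚ)) / (n.factorial : ℚ)) •
      (∑ j ∈ Finset.range (n + 1), (n.choose j : A) *
        (pBell d (n - j) (a + 1) * pBell d (j + 1) (b + 1))) =
    ((((a+1).factorial : ℚ) * ((b+1).factorial : ℚ)) / (n.factorial : ℚ)) •
      (((a + b + 1).choose b : A) * pBell d (n + 1) (a + b + 2))
  rw [Finset.smul_sum]
  have step1 : ∀ j ∈ Finset.range (n + 1),
      ((((a+1).factorial : ℚ) * ((b+1).factorial : ℚ)) / (n.factorial : ℚ)) •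
          ((n.choose j : A) * (pBell d (n - j) (a + 1) * pBell d (j + 1) (b + 1))) =
        ((((a+1).factorial : ℚ) * ((b+1).factorial : ℚ)) / (((n-j).factorial : ℚ) * (j.factorial : ℚ))) •
          (pBell d (n - j) (a + 1) * pBell d (j + 1) (b + 1)) := by
    intro j hj
    have hjn : j ≤ n := by simpa [Nat.lt_succ_iff] using hj
    rw [natCast_mul_eq_smul (A := A) (n.choose j), smul_smul]
    congr 1
    rw [Nat.cast_choose ℚ hjn]
    field_simp
  rw [Finset.sum_congr rfl step1, ← hL, E, hR, natCast_mul_eq_smul (A := A) ((a+b+1).choose b), smul_smul]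
  congr 1
  rw [Nat.cast_choose ℚ (show b ≤ a + b + 1 by omega),
    show a + b + 1 - b = a + 1 by omega,
    show (b+1).factorial = (b+1) * b.factorial from Nat.factorial_succ _]
  push_cast
  field_simp
end Series

lemma pBell_map {B : Type*} [CommRing B] (φ : A →+* B) :
    ∀ k n, φ (pBell d n k) = pBell (fun j => φ (d j)) n k := by
  intro k
  induction k with
  | zero =>
    intro n
    cases n with
    | zero => simp
    | succ m => simp
  | succ k ih =>
    intro n
    cases n with
    | zero => simp
    | succ m =>
      rw [pBell_succ_succ, map_sum, pBell_succ_succ]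
      refine Finset.sum_congr rfl fun j hj => ?_
      rw [map_mul, map_mul, map_natCast, ih]

lemma pBell_delta (e : ℕ → A) (h1 : e 1 = 1) (h2 : ∀ j, 2 ≤ j → e j = 0) :
    ∀ k n, pBell e n k = if n = k then 1 else 0 := by
  intro k
  induction k with
  | zero =>
    intro n
    cases n with
    | zero => simp
    | succ m => simp
  | succ k ih =>
    intro n
    cases n with
    | zero => simp
    | succ m =>
      rw [pBell_succ_succ, Finset.sum_eq_single 0]
      · rw [Nat.sub_zero, ih, h1]
        simp
      · intro j hj hne
        rw [h2 (j+1) (by omega), mul_zero, mul_zero]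
      · intro h
        exact absurd (Finset.mem_range.mpr (Nat.succ_pos m)) h

noncomputable def xv : ℕ → MvPolynomial ℕ ℚ :=
  fun n => if n = 0 then 1 else MvPolynomial.X (n - 1)

noncomputable def Wfdb (n k : ℕ) : MvPolynomial ℕ ℚ :=
  pBell (fun j => xv (j - 1)) (n + 1) (k + 1)

noncomputable def Δfdb :
    MvPolynomial ℕ ℚ →ₐ[ℚ] (MvPolynomial ℕ ℚ) ⊗[ℚ] (MvPolynomial ℕ ℚ) :=
  MvPolynomial.aeval (fun n => ∑ k ∈ Finset.range (n + 2), Wfdb (n + 1) k ⊗ₜ[ℚ] xv k)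

noncomputable def εfdb : MvPolynomial ℕ ℚ →ₐ[ℚ] ℚ :=
  MvPolynomial.aeval (fun _ => (0 : ℚ))

section FdB

local notation "H" => MvPolynomial ℕ ℚ

noncomputable def dv : ℕ → H := fun j => xv (j - 1)

lemma Wfdb_def (n k : ℕ) : Wfdb n k = pBell dv (n + 1) (k + 1) := rfl

lemma xv_zero : xv 0 = 1 := rfl

lemma xv_succ (n : ℕ) : xv (n + 1) = MvPolynomial.X n := rfl

lemma dv_succ (j : ℕ) : dv (j + 1) = xv j := rfl

lemma Wfdb_vanish {n k : ℕ} (h : n < k) : Wfdb n k = 0 :=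
  pBell_eq_zero dv _ _ (by omega)

lemma Wfdb_zero (n : ℕ) : Wfdb n 0 = xv n := by
  rw [Wfdb_def, pBell_succ_succ, Finset.sum_eq_single n]
  · rw [Nat.sub_self, pBell_zero_zero, Nat.choose_self, Nat.cast_one, one_mul, one_mul, dv_succ]
  · intro j hj hne
    have h : n - j ≠ 0 := by
      have := Finset.mem_range.mp hj; omega
    obtain ⟨m, hm⟩ := Nat.exists_eq_succ_of_ne_zero h
    rw [hm, pBell_succ_zero, zero_mul, mul_zero]
  · intro h
    exact absurd (Finset.self_mem_range_succ n) h

lemma Wfdb_unit : Wfdb 0 0 = 1 := by rw [Wfdb_zero, xv_zero]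

lemma Wfdb_rec (n k : ℕ) :
    Wfdb n (k + 1) = ∑ j ∈ Finset.range n, (n.choose j : H) * (Wfdb (n - 1 - j) k * xv j) := by
  rw [Wfdb_def, pBell_succ_succ, Finset.sum_range_succ, Nat.sub_self, pBell_zero_succ,
    zero_mul, mul_zero, add_zero]
  refine Finset.sum_congr rfl fun j hj => ?_
  have hjn : j < n := Finset.mem_range.mp hj
  rw [show n - j = n - 1 - j + 1 by omega]
  rfl

lemma Δfdb_xv (n : ℕ) :
    Δfdb (xv n) = ∑ k ∈ Finset.range (n + 1), Wfdb n k ⊗ₜ[ℚ] xv k := by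
  cases n with
  | zero =>
    rw [xv_zero, map_one, Finset.sum_range_one, Wfdb_unit, xv_zero,
      Algebra.TensorProduct.one_def]
  | succ m =>
    rw [xv_succ, Δfdb, MvPolynomial.aeval_X]

lemma Wconv (n a b : ℕ) :
    ∑ j ∈ Finset.range n, (n.choose j : H) * (Wfdb (n - 1 - j) a * Wfdb j b) =
      ((a + b + 1).choose b : H) * Wfdb n (a + b + 1) := by
  have h := pBell_conv dv n a b
  rw [Wfdb_def, ← h, Finset.sum_range_succ, Nat.sub_self, pBell_zero_succ,
    zero_mul, mul_zero, add_zero]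
  refine Finset.sum_congr rfl fun j hj => ?_
  have hjn : j < n := Finset.mem_range.mp hj
  rw [show n - j = n - 1 - j + 1 by omega]
  rfl

lemma comatrix : ∀ k n, Δfdb (Wfdb n k) =
    ∑ m ∈ Finset.range (n + 1), Wfdb n m ⊗ₜ[ℚ] Wfdb m k := by
  intro k
  induction k with
  | zero =>
    intro n
    rw [Wfdb_zero, Δfdb_xv]
    exact Finset.sum_congr rfl fun m _ => by rw [Wfdb_zero]
  | succ k ih =>
    intro n
    rw [Wfdb_rec, map_sum]
    have hterm : ∀ j ∈ Finset.range n,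
        Δfdb ((n.choose j : H) * (Wfdb (n - 1 - j) k * xv j)) =
          ∑ a ∈ Finset.range n, ∑ b ∈ Finset.range n,
            ((n.choose j : ℚ)) • ((Wfdb (n - 1 - j) a * Wfdb j b) ⊗ₜ[ℚ] (Wfdb a k * xv b)) := by
      intro j hj
      have hjn : j < n := Finset.mem_range.mp hj
      rw [map_mul, map_mul, map_natCast, ih, Δfdb_xv]
      have e1 : ∑ a ∈ Finset.range (n - 1 - j + 1), Wfdb (n - 1 - j) a ⊗ₜ[ℚ] Wfdb a k =
          ∑ a ∈ Finset.range n, Wfdb (n - 1 - j) a ⊗ₜ[ℚ] Wfdb a k := by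
        apply Finset.sum_subset
        · intro x hx
          simp only [Finset.mem_range] at hx ⊢
          omega
        · intro a ha hna
          simp only [Finset.mem_range] at ha hna
          rw [Wfdb_vanish (show n - 1 - j < a by omega), zero_tmul]
      have e2 : ∑ b ∈ Finset.range (j + 1), Wfdb j b ⊗ₜ[ℚ] xv b =
          ∑ b ∈ Finset.range n, Wfdb j b ⊗ₜ[ℚ] xv b := by
        apply Finset.sum_subset
        · intro x hx
          simp only [Finset.mem_range] at hx ⊢
          omega
        · intro b hb hnb
          simp only [Finset.mem_range] at hb hnb
          rw [Wfdb_vanish (show j < b by omega), zero_tmul]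
      rw [e1, e2, Finset.sum_mul_sum,
        natCast_mul_eq_smul (A := (MvPolynomial ℕ ℚ) ⊗[ℚ] (MvPolynomial ℕ ℚ)) (n.choose j),
        Finset.smul_sum]
      refine Finset.sum_congr rfl fun a _ => ?_
      rw [Finset.smul_sum]
      refine Finset.sum_congr rfl fun b _ => ?_
      rw [Algebra.TensorProduct.tmul_mul_tmul]
    rw [Finset.sum_congr rfl hterm, Finset.sum_comm]
    have hswap : ∀ a ∈ Finset.range n,
        (∑ j ∈ Finset.range n, ∑ b ∈ Finset.range n,
          ((n.choose j : ℚ)) • ((Wfdb (n - 1 - j) a * Wfdb j b) ⊗ₜ[ℚ] (Wfdb a k * xv b))) =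
        ∑ b ∈ Finset.range n, ((((a + b + 1).choose b : ℚ))) •
          (Wfdb n (a + b + 1) ⊗ₜ[ℚ] (Wfdb a k * xv b)) := by
      intro a _
      rw [Finset.sum_comm]
      refine Finset.sum_congr rfl fun b _ => ?_
      have h1 : ∀ j ∈ Finset.range n,
          ((n.choose j : ℚ)) • ((Wfdb (n - 1 - j) a * Wfdb j b) ⊗ₜ[ℚ] (Wfdb a k * xv b)) =
            ((n.choose j : H) * (Wfdb (n - 1 - j) a * Wfdb j b)) ⊗ₜ[ℚ] (Wfdb a k * xv b) := by
        intro j _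
        rw [natCast_mul_eq_smul (A := MvPolynomial ℕ ℚ) (n.choose j), smul_tmul']
      rw [Finset.sum_congr rfl h1, ← TensorProduct.sum_tmul, Wconv,
        natCast_mul_eq_smul (A := MvPolynomial ℕ ℚ) ((a + b + 1).choose b), smul_tmul']
    rw [Finset.sum_congr rfl hswap]
    have hRHS : ∀ m ∈ Finset.range (n + 1),
        Wfdb n m ⊗ₜ[ℚ] Wfdb m (k + 1) =
          ∑ i ∈ Finset.range m, ((m.choose i : ℚ)) •
            (Wfdb n m ⊗ₜ[ℚ] (Wfdb (m - 1 - i) k * xv i)) := by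
      intro m _
      rw [Wfdb_rec m k, tmul_sum]
      refine Finset.sum_congr rfl fun i _ => ?_
      rw [natCast_mul_eq_smul (A := MvPolynomial ℕ ℚ) (m.choose i), tmul_smul]
    rw [Finset.sum_congr rfl hRHS, ← Finset.sum_product', Finset.sum_sigma',
      ← Finset.sum_filter_add_sum_filter_not (Finset.range n ×ˢ Finset.range n)
        (fun p => p.1 + p.2 < n)]
    have hzero : ∑ p ∈ (Finset.range n ×ˢ Finset.range n).filter (fun p => ¬ p.1 + p.2 < n),
        (((p.1 + p.2 + 1).choose p.2 : ℚ)) •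
          (Wfdb n (p.1 + p.2 + 1) ⊗ₜ[ℚ] (Wfdb p.1 k * xv p.2)) = 0 := by
      refine Finset.sum_eq_zero fun p hp => ?_
      have := Finset.mem_filter.mp hp
      rw [Wfdb_vanish (show n < p.1 + p.2 + 1 by omega), zero_tmul, smul_zero]
    rw [hzero, add_zero]
    refine Finset.sum_nbij' (fun p => (⟨p.1 + p.2 + 1, p.2⟩ : Σ _ : ℕ, ℕ))
      (fun q => (q.1 - 1 - q.2, q.2)) ?_ ?_ ?_ ?_ ?_
    · intro p hp
      simp only [Finset.mem_filter, Finset.mem_product, Finset.mem_range] at hp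
      simp only [Finset.mem_sigma, Finset.mem_range]
      omega
    · intro q hq
      simp only [Finset.mem_sigma, Finset.mem_range] at hq
      simp only [Finset.mem_filter, Finset.mem_product, Finset.mem_range]
      omega
    · intro p hp
      simp only [Finset.mem_filter, Finset.mem_product, Finset.mem_range] at hp
      ext <;> simp <;> omega
    · intro q hq
      simp only [Finset.mem_sigma, Finset.mem_range] at hq
      ext <;> simp <;> omega
    · intro p hp
      simp only [Finset.mem_filter, Finset.mem_product, Finset.mem_range] at hp
      rw [show p.1 + p.2 + 1 - 1 - p.2 = p.1 by omega]

lemma εfdb_xv_zero : εfdb (xv 0) = 1 := by rw [xv_zero, map_one]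

lemma εfdb_xv_succ (m : ℕ) : εfdb (xv (m + 1)) = 0 := by
  rw [xv_succ, εfdb, MvPolynomial.aeval_X]

lemma εfdb_Wfdb (n k : ℕ) : εfdb (Wfdb n k) = if n = k then 1 else 0 := by
  rw [Wfdb_def, show εfdb (pBell dv (n + 1) (k + 1)) =
      pBell (fun j => εfdb (dv j)) (n + 1) (k + 1) from pBell_map dv _ _ _,
    pBell_delta]
  · simp
  · show εfdb (dv 1) = 1
    exact εfdb_xv_zero
  · intro j hj
    obtain ⟨m, rfl⟩ : ∃ m, j = m + 2 := ⟨j - 2, by omega⟩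
    show εfdb (xv (m + 2 - 1)) = 0
    exact εfdb_xv_succ m

lemma Δfdb_X (n : ℕ) :
    Δfdb (MvPolynomial.X n) = ∑ k ∈ Finset.range (n + 2), Wfdb (n + 1) k ⊗ₜ[ℚ] xv k := by
  rw [Δfdb, MvPolynomial.aeval_X]

set_option synthInstance.maxHeartbeats 1000000 in
lemma coassoc_algHom :
    (Algebra.TensorProduct.assoc ℚ ℚ ℚ H H H).toAlgHom.comp
        ((Algebra.TensorProduct.map Δfdb (AlgHom.id ℚ H)).comp Δfdb) =
      (Algebra.TensorProduct.map (AlgHom.id ℚ H) Δfdb).comp Δfdb := by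
  apply MvPolynomial.algHom_ext
  intro n
  simp only [AlgHom.coe_comp, Function.comp_apply, AlgEquiv.toAlgHom_eq_coe,
    AlgEquiv.coe_algHom]
  rw [Δfdb_X, map_sum, map_sum, map_sum]
  have hL : ∀ k ∈ Finset.range (n + 2),
      (Algebra.TensorProduct.assoc ℚ ℚ ℚ H H H)
          ((Algebra.TensorProduct.map Δfdb (AlgHom.id ℚ H)) (Wfdb (n + 1) k ⊗ₜ[ℚ] xv k)) =
        ∑ m ∈ Finset.range (n + 2), Wfdb (n + 1) m ⊗ₜ[ℚ] (Wfdb m k ⊗ₜ[ℚ] xv k) := by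
    intro k _
    rw [Algebra.TensorProduct.map_tmul, AlgHom.coe_id, id_eq, comatrix,
      TensorProduct.sum_tmul, map_sum]
    exact Finset.sum_congr rfl fun m _ => by rw [Algebra.TensorProduct.assoc_tmul]
  have hR : ∀ k ∈ Finset.range (n + 2),
      (Algebra.TensorProduct.map (AlgHom.id ℚ H) Δfdb) (Wfdb (n + 1) k ⊗ₜ[ℚ] xv k) =
        ∑ m ∈ Finset.range (k + 1), Wfdb (n + 1) k ⊗ₜ[ℚ] (Wfdb k m ⊗ₜ[ℚ] xv m) := by
    intro k _
    rw [Algebra.TensorProduct.map_tmul, AlgHom.coe_id, id_eq, Δfdb_xv, TensorProduct.tmul_sum]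
  have hmid : ∑ k ∈ Finset.range (n + 2), ∑ m ∈ Finset.range (n + 2),
        Wfdb (n + 1) m ⊗ₜ[ℚ] (Wfdb m k ⊗ₜ[ℚ] xv k) =
      ∑ k ∈ Finset.range (n + 2), ∑ m ∈ Finset.range (k + 1),
        Wfdb (n + 1) k ⊗ₜ[ℚ] (Wfdb k m ⊗ₜ[ℚ] xv m) := by
    rw [Finset.sum_comm]
    refine Finset.sum_congr rfl fun m hm => ?_
    refine (Finset.sum_subset ?_ ?_).symm
    · intro x hx
      simp only [Finset.mem_range] at hx ⊢
      have := Finset.mem_range.mp hm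
      omega
    · intro k _ hk
      simp only [Finset.mem_range, not_lt] at hk
      rw [Wfdb_vanish (show m < k by omega), zero_tmul, TensorProduct.tmul_zero]
  exact (Finset.sum_congr rfl hL).trans (hmid.trans (Finset.sum_congr rfl hR).symm)

lemma counitl_algHom :
    (Algebra.TensorProduct.lid ℚ H).toAlgHom.comp
        ((Algebra.TensorProduct.map εfdb (AlgHom.id ℚ H)).comp Δfdb) = AlgHom.id ℚ H := by
  apply MvPolynomial.algHom_ext
  intro n
  simp only [AlgHom.coe_comp, Function.comp_apply, AlgEquiv.toAlgHom_eq_coe,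
    AlgEquiv.coe_algHom, AlgHom.coe_id, id_eq]
  rw [Δfdb_X, map_sum, map_sum]
  have h : ∀ k ∈ Finset.range (n + 2),
      (Algebra.TensorProduct.lid ℚ H)
          ((Algebra.TensorProduct.map εfdb (AlgHom.id ℚ H)) (Wfdb (n + 1) k ⊗ₜ[ℚ] xv k)) =
        (if n + 1 = k then (1 : ℚ) else 0) • xv k := by
    intro k _
    rw [Algebra.TensorProduct.map_tmul, AlgHom.coe_id, id_eq, εfdb_Wfdb,
      Algebra.TensorProduct.lid_tmul]
  refine (Finset.sum_congr rfl h).trans ?_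
  rw [Finset.sum_eq_single (n + 1)]
  · rw [if_pos rfl, one_smul, xv_succ]
  · intro k _ hk
    rw [if_neg (fun h2 => hk h2.symm), zero_smul]
  · intro h2
    exact absurd (Finset.mem_range.mpr (by omega)) h2

lemma counitr_algHom :
    (Algebra.TensorProduct.rid ℚ ℚ H).toAlgHom.comp
        ((Algebra.TensorProduct.map (AlgHom.id ℚ H) εfdb).comp Δfdb) = AlgHom.id ℚ H := by
  apply MvPolynomial.algHom_ext
  intro n
  simp only [AlgHom.coe_comp, Function.comp_apply, AlgEquiv.toAlgHom_eq_coe,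
    AlgEquiv.coe_algHom, AlgHom.coe_id, id_eq]
  rw [Δfdb_X, map_sum, map_sum]
  have h : ∀ k ∈ Finset.range (n + 2),
      (Algebra.TensorProduct.rid ℚ ℚ H)
          ((Algebra.TensorProduct.map (AlgHom.id ℚ H) εfdb) (Wfdb (n + 1) k ⊗ₜ[ℚ] xv k)) =
        εfdb (xv k) • Wfdb (n + 1) k := by
    intro k _
    rw [Algebra.TensorProduct.map_tmul, AlgHom.coe_id, id_eq,
      Algebra.TensorProduct.rid_tmul]
  refine (Finset.sum_congr rfl h).trans ?_
  rw [Finset.sum_eq_single 0]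
  · rw [εfdb_xv_zero, one_smul, Wfdb_zero, xv_succ]
  · intro k _ hk
    obtain ⟨m, rfl⟩ : ∃ m, k = m + 1 := ⟨k - 1, by omega⟩
    rw [εfdb_xv_succ, zero_smul]
  · intro h2
    exact absurd (Finset.mem_range.mpr (by omega)) h2


lemma bridge_map {B C D E : Type*} [CommSemiring B] [CommSemiring C] [CommSemiring D]
    [CommSemiring E] [Algebra ℚ B] [Algebra ℚ C] [Algebra ℚ D] [Algebra ℚ E]
    (f : B →ₐ[ℚ] C) (g : D →ₐ[ℚ] E) (z : B ⊗[ℚ] D) :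
    TensorProduct.map f.toLinearMap g.toLinearMap z = Algebra.TensorProduct.map f g z := by
  induction z with
  | zero => simp
  | tmul x y => rfl
  | add x y hx hy => rw [map_add, map_add, hx, hy]

/-- The Faà di Bruno coproduct is coassociative and `ε` is a counit for it. -/
theorem stmt16 :
    (∀ a : MvPolynomial ℕ ℚ,
      (TensorProduct.assoc ℚ (MvPolynomial ℕ ℚ) (MvPolynomial ℕ ℚ) (MvPolynomial ℕ ℚ))
          ((TensorProduct.map Δfdb.toLinearMap LinearMap.id) (Δfdb a)) =
        (TensorProduct.map LinearMap.id Δfdb.toLinearMap) (Δfdb a)) ∧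
    (∀ a : MvPolynomial ℕ ℚ,
      (TensorProduct.lid ℚ (MvPolynomial ℕ ℚ))
          ((TensorProduct.map εfdb.toLinearMap LinearMap.id) (Δfdb a)) = a) ∧
    (∀ a : MvPolynomial ℕ ℚ,
      (TensorProduct.rid ℚ (MvPolynomial ℕ ℚ))
          ((TensorProduct.map LinearMap.id εfdb.toLinearMap) (Δfdb a)) = a) := by
  refine ⟨fun a => ?_, fun a => ?_, fun a => ?_⟩
  · have h := AlgHom.congr_fun coassoc_algHom a
    simp only [AlgHom.coe_comp, Function.comp_apply, AlgEquiv.toAlgHom_eq_coe,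
      AlgEquiv.coe_algHom] at h
    have b1 : (LinearMap.id : H →ₗ[ℚ] H) = (AlgHom.id ℚ H).toLinearMap := rfl
    rw [b1, bridge_map Δfdb (AlgHom.id ℚ H), bridge_map (AlgHom.id ℚ H) Δfdb]
    have b3 : (TensorProduct.assoc ℚ H H H)
          ((Algebra.TensorProduct.map Δfdb (AlgHom.id ℚ H)) (Δfdb a)) =
        (Algebra.TensorProduct.assoc ℚ ℚ ℚ H H H)
          ((Algebra.TensorProduct.map Δfdb (AlgHom.id ℚ H)) (Δfdb a)) := rfl
    rw [b3]
    exact h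
  · have h := AlgHom.congr_fun counitl_algHom a
    simp only [AlgHom.coe_comp, Function.comp_apply, AlgEquiv.toAlgHom_eq_coe,
      AlgEquiv.coe_algHom, AlgHom.coe_id, id_eq] at h
    have b1 : (LinearMap.id : H →ₗ[ℚ] H) = (AlgHom.id ℚ H).toLinearMap := rfl
    rw [b1, bridge_map εfdb (AlgHom.id ℚ H)]
    exact h
  · have h := AlgHom.congr_fun counitr_algHom a
    simp only [AlgHom.coe_comp, Function.comp_apply, AlgEquiv.toAlgHom_eq_coe,
      AlgEquiv.coe_algHom, AlgHom.coe_id, id_eq] at h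
    have b1 : (LinearMap.id : H →ₗ[ℚ] H) = (AlgHom.id ℚ H).toLinearMap := rfl
    rw [b1, bridge_map (AlgHom.id ℚ H) εfdb]
    have b2 : (TensorProduct.rid ℚ H)
          ((Algebra.TensorProduct.map (AlgHom.id ℚ H) εfdb) (Δfdb a)) =
        (Algebra.TensorProduct.rid ℚ ℚ H)
          ((Algebra.TensorProduct.map (AlgHom.id ℚ H) εfdb) (Δfdb a)) := by
      rw [← AlgebraTensorModule.rid_eq_rid]
      rfl
    rw [b2]
    exact h

end FdB
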